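/- Let h : ℝ^m → ℝ with associated vector map V_h(u) = (h(u), u₁,…,u_{m-1}), and suppose x̄ satisfies h(x̄,…,x̄) = x̄ and |h(X) - x̄| ≤ β ‖X - X̄‖_∞ for all X ∈ ℝ^m, where X̄ = (x̄,…,x̄) and 0 ≤ β < 1. Then for every X ∈ ℝ^m, the iterates V_h^n(X) converge to X̄ as n → ∞, and moreover ‖V_h^{km}(X) - X̄‖_∞ ≤ β^k ‖X - X̄‖_∞ for all k ≥ 1. -/
import Mathlib


open Filter

/-- The associated vector map `V_h(u₁,…,u_m) = (h(u), u₁,…,u_{m-1})`. -/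
def assocVec (m : ℕ) (f : (Fin m → ℝ) → ℝ) (u : Fin m → ℝ) : Fin m → ℝ :=
  fun i =>
    if _h : (i : ℕ) = 0 then f u
    else u ⟨(i : ℕ) - 1, Nat.lt_of_le_of_lt (Nat.sub_le _ _) i.isLt⟩

/-- If `h(x̄,…,x̄) = x̄` and `|h X - x̄| ≤ β ‖X - Xbar‖∞` everywhere with `0 ≤ β < 1`, then
the iterates of `V_h` converge to the constant vector `Xbar`, with
`‖V_h^[k*m] X - Xbar‖∞ ≤ β^k ‖X - Xbar‖∞` for all `k ≥ 1`. -/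
theorem stmt_13 (m : ℕ) (hm : 1 ≤ m) (h : (Fin m → ℝ) → ℝ) (xbar : ℝ)
    (heq : h (fun _ => xbar) = xbar) (β : ℝ) (hβ0 : 0 ≤ β) (hβ1 : β < 1)
    (hcontr : ∀ X : Fin m → ℝ, |h X - xbar| ≤ β * ‖X - fun _ => xbar‖) :
    ∀ X : Fin m → ℝ,
      Tendsto (fun n => (assocVec m h)^[n] X) atTop (nhds fun _ => xbar) ∧
        ∀ k, 1 ≤ k →
          ‖(assocVec m h)^[k * m] X - fun _ => xbar‖ ≤ β ^ k * ‖X - fun _ => xbar‖ := by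
  intro X
  set xb : Fin m → ℝ := fun _ => xbar with hxb
  set V : (Fin m → ℝ) → (Fin m → ℝ) := assocVec m h with hV
  -- one step does not increase the distance
  have step : ∀ Y : Fin m → ℝ, ‖V Y - xb‖ ≤ ‖Y - xb‖ := by
    intro Y
    rw [pi_norm_le_iff_of_nonneg (norm_nonneg _)]
    intro i
    by_cases h0 : (i : ℕ) = 0
    · have : (V Y - xb) i = h Y - xbar := by
        simp [hV, assocVec, h0, hxb]
      rw [this, Real.norm_eq_abs]
      calc |h Y - xbar| ≤ β * ‖Y - xb‖ := hcontr Y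
        _ ≤ 1 * ‖Y - xb‖ := by
            exact mul_le_mul_of_nonneg_right (le_of_lt hβ1) (norm_nonneg _)
        _ = ‖Y - xb‖ := one_mul _
    · have : (V Y - xb) i
          = (Y - xb) ⟨(i : ℕ) - 1, Nat.lt_of_le_of_lt (Nat.sub_le _ _) i.isLt⟩ := by
        simp [hV, assocVec, h0, hxb]
      rw [this]
      exact norm_le_pi_norm _ _
  -- distance is nonincreasing along iterates
  have decr : ∀ (n : ℕ) (Y : Fin m → ℝ), ‖V^[n] Y - xb‖ ≤ ‖Y - xb‖ := by
    intro n
    induction n with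
    | zero => intro Y; simp
    | succ n ih =>
      intro Y
      rw [Function.iterate_succ_apply']
      exact le_trans (step _) (ih Y)
  -- coordinates with index < n have been replaced by values of h
  have coord : ∀ (Y : Fin m → ℝ) (n : ℕ) (i : Fin m), (i : ℕ) < n →
      ‖(V^[n] Y - xb) i‖ ≤ β * ‖Y - xb‖ := by
    intro Y n
    induction n with
    | zero => intro i hi; omega
    | succ n ih =>
      intro i hi
      rw [Function.iterate_succ_apply']
      by_cases h0 : (i : ℕ) = 0
      · have : (V (V^[n] Y) - xb) i = h (V^[n] Y) - xbar := by
          simp [hV, assocVec, h0, hxb]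
        rw [this, Real.norm_eq_abs]
        calc |h (V^[n] Y) - xbar| ≤ β * ‖V^[n] Y - xb‖ := hcontr _
          _ ≤ β * ‖Y - xb‖ := mul_le_mul_of_nonneg_left (decr n Y) hβ0
      · have hlt : ((i : ℕ) - 1) < n := by omega
        have heqc : (V (V^[n] Y) - xb) i
            = (V^[n] Y - xb) ⟨(i : ℕ) - 1, Nat.lt_of_le_of_lt (Nat.sub_le _ _) i.isLt⟩ := by
          simp [hV, assocVec, h0, hxb]
        rw [heqc]
        exact ih _ hlt
  -- a block of m iterations contracts by β
  have block : ∀ Y : Fin m → ℝ, ‖V^[m] Y - xb‖ ≤ β * ‖Y - xb‖ := by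
    intro Y
    rw [pi_norm_le_iff_of_nonneg (mul_nonneg hβ0 (norm_nonneg _))]
    intro i
    exact coord Y m i i.isLt
  -- k blocks contract by β^k
  have kblock : ∀ k : ℕ, ‖V^[k * m] X - xb‖ ≤ β ^ k * ‖X - xb‖ := by
    intro k
    induction k with
    | zero => simp
    | succ k ih =>
      have : (k + 1) * m = m + k * m := by ring
      rw [this, Function.iterate_add_apply]
      calc ‖V^[m] (V^[k * m] X) - xb‖ ≤ β * ‖V^[k * m] X - xb‖ := block _
        _ ≤ β * (β ^ k * ‖X - xb‖) := mul_le_mul_of_nonneg_left ih hβ0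
        _ = β ^ (k + 1) * ‖X - xb‖ := by ring
  constructor
  · -- convergence
    have bound : ∀ n : ℕ, ‖V^[n] X - xb‖ ≤ β ^ (n / m) * ‖X - xb‖ := by
      intro n
      have hn : n = n % m + n / m * m := (Nat.mod_add_div' n m).symm
      calc ‖V^[n] X - xb‖ = ‖V^[n % m] (V^[n / m * m] X) - xb‖ := by
            conv_lhs => rw [hn, Function.iterate_add_apply]
        _ ≤ ‖V^[n / m * m] X - xb‖ := decr _ _
        _ ≤ β ^ (n / m) * ‖X - xb‖ := kblock _
    have hdiv : Tendsto (fun n : ℕ => n / m) atTop atTop := by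
      apply tendsto_atTop_atTop.2
      intro b
      exact ⟨b * m, fun n hn => (Nat.le_div_iff_mul_le hm).2 hn⟩
    have htend0 : Tendsto (fun n : ℕ => β ^ (n / m) * ‖X - xb‖) atTop (nhds 0) := by
      have h1 : Tendsto (fun n : ℕ => β ^ n) atTop (nhds 0) :=
        tendsto_pow_atTop_nhds_zero_of_lt_one hβ0 hβ1
      have := (h1.comp hdiv).mul_const ‖X - xb‖
      simpa using this
    have : Tendsto (fun n : ℕ => ‖V^[n] X - xb‖) atTop (nhds 0) :=
      squeeze_zero (fun n => norm_nonneg _) bound htend0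
    exact tendsto_iff_norm_sub_tendsto_zero.2 this
  · intro k _
    exact kblock k
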